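/- The Banach space c₀ of real sequences converging to zero (with the supremum norm) is locally 1-injective: for every finite-dimensional Banach space B and every subspace A ⊆ B, every linear operator t : A → c₀ extends to a linear operator T : B → c₀ with ‖T‖ = ‖t‖. -/

import Mathlib

/-- A bundled Banach space over `ℝ`. -/
structure BanachSpace : Type (u + 1) where
  carrier : Type u
  [norm : NormedAddCommGroup carrier]
  [space : NormedSpace ℝ carrier]
  [complete : CompleteSpace carrier]

attribute [instance] BanachSpace.norm BanachSpace.space BanachSpace.complete

instance : CoeSort BanachSpace.{u} (Type u) := ⟨BanachSpace.carrier⟩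

open scoped ZeroAtInfty
open ZeroAtInftyContinuousMap Filter Topology

/-- Evaluation at a point, as a continuous linear functional on `c₀`. -/
noncomputable def czeroEval (n : ℕ) : C₀(ℕ, ℝ) →L[ℝ] ℝ :=
  LinearMap.mkContinuous
    { toFun := fun f => f n
      map_add' := fun _ _ => rfl
      map_smul' := fun _ _ => rfl } 1
    (fun f => by
      simpa using (f.toBCF.norm_coe_le_norm n).trans_eq f.norm_toBCF_eq_norm)

theorem czeroEval_norm_le (n : ℕ) : ‖czeroEval n‖ ≤ 1 :=
  LinearMap.mkContinuous_norm_le _ zero_le_one _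

/-- The coordinate functionals of an operator from a finite-dimensional space into `c₀`
tend to `0` in operator norm. -/
theorem coord_norm_tendsto {A : Type} [NormedAddCommGroup A] [NormedSpace ℝ A]
    [FiniteDimensional ℝ A] (t : A →L[ℝ] C₀(ℕ, ℝ)) :
    Tendsto (fun n => ‖(czeroEval n).comp t‖) atTop (𝓝 0) := by
  set b := Module.finBasis ℝ A
  set c : Fin (Module.finrank ℝ A) → (A →L[ℝ] ℝ) :=
    fun i => LinearMap.toContinuousLinearMap (b.coord i)
  have key : ∀ n, ‖(czeroEval n).comp t‖ ≤ ∑ i, ‖c i‖ * ‖(t (b i)) n‖ := by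
    intro n
    refine ContinuousLinearMap.opNorm_le_bound _ (by positivity) ?_
    intro a
    have ha : a = ∑ i, b.coord i a • b i := by
      simpa using (b.sum_repr a).symm
    have : ((czeroEval n).comp t) a = ∑ i, b.coord i a * (t (b i)) n := by
      conv_lhs => rw [ha]
      simp [czeroEval, map_sum, -Module.Basis.sum_repr]
    rw [this, Finset.sum_mul]
    refine (norm_sum_le _ _).trans (Finset.sum_le_sum fun i _ => ?_)
    rw [norm_mul, mul_right_comm]
    gcongr
    exact (c i).le_opNorm a
  have hz : Tendsto (fun n => ∑ i, ‖c i‖ * ‖(t (b i)) n‖) atTop (𝓝 0) := by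
    have : Tendsto (fun n => ∑ i : Fin (Module.finrank ℝ A), ‖c i‖ * ‖(t (b i)) n‖)
        atTop (𝓝 (∑ i : Fin (Module.finrank ℝ A), ‖c i‖ * 0)) := by
      refine tendsto_finset_sum _ fun i _ => Tendsto.const_mul _ ?_
      have := (t (b i)).zero_at_infty'
      rw [cocompact_eq_atTop] at this
      simpa using this.norm
    simpa using this
  exact squeeze_zero (fun n => norm_nonneg _) key hz

/-- Local 1-injectivity of `c₀`, unbundled version. -/
theorem czero_extension {E : Type} [NormedAddCommGroup E] [NormedSpace ℝ E]
    [FiniteDimensional ℝ E] (A : Submodule ℝ E) (t : A →L[ℝ] C₀(ℕ, ℝ)) :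
    ∃ T : E →L[ℝ] C₀(ℕ, ℝ),
      (∀ a : A, T (a : E) = t a) ∧ ‖T‖ = ‖t‖ := by
  choose g hg hgnorm using fun n => exists_extension_norm_eq A ((czeroEval n).comp t)
  have hten : Tendsto (fun n => ‖(czeroEval n).comp t‖) atTop (𝓝 0) :=
    coord_norm_tendsto t
  have hbound : ∀ n (x : E), ‖g n x‖ ≤ ‖(czeroEval n).comp t‖ * ‖x‖ := by
    intro n x
    simpa [hgnorm n] using (g n).le_opNorm x
  have hbound' : ∀ n (x : E), ‖g n x‖ ≤ ‖t‖ * ‖x‖ := by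
    intro n x
    refine (hbound n x).trans ?_
    gcongr
    calc ‖(czeroEval n).comp t‖ ≤ ‖czeroEval n‖ * ‖t‖ := ContinuousLinearMap.opNorm_comp_le _ _
      _ ≤ 1 * ‖t‖ := by gcongr; exact czeroEval_norm_le n
      _ = ‖t‖ := one_mul _
  have hzero : ∀ x : E, Tendsto (fun n => g n x) (cocompact ℕ) (𝓝 0) := by
    intro x
    rw [cocompact_eq_atTop]
    have : Tendsto (fun n => ‖(czeroEval n).comp t‖ * ‖x‖) atTop (𝓝 (0 * ‖x‖)) :=
      hten.mul_const _
    rw [zero_mul] at this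
    exact squeeze_zero_norm (fun n => hbound n x) this
  set Tfun : E → C₀(ℕ, ℝ) := fun x =>
    { toFun := fun n => g n x
      continuous_toFun := continuous_of_discreteTopology
      zero_at_infty' := hzero x }
  have hTfun : ∀ x n, (Tfun x) n = g n x := fun _ _ => rfl
  have hTnorm : ∀ x, ‖Tfun x‖ ≤ ‖t‖ * ‖x‖ := by
    intro x
    rw [← norm_toBCF_eq_norm]
    exact BoundedContinuousFunction.norm_le_of_nonempty.mpr fun n => hbound' n x
  set T : E →L[ℝ] C₀(ℕ, ℝ) := LinearMap.mkContinuous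
    { toFun := Tfun
      map_add' := fun x y => by ext n; simp [hTfun]
      map_smul' := fun c x => by ext n; simp [hTfun] } ‖t‖ hTnorm
  have hext : ∀ a : A, T (a : E) = t a := by
    intro a
    ext n
    show g n a = _
    rw [hg n a]
    rfl
  refine ⟨T, hext, le_antisymm (LinearMap.mkContinuous_norm_le _ (norm_nonneg t) _) ?_⟩
  refine t.opNorm_le_bound (norm_nonneg T) fun a => ?_
  rw [← hext a]
  exact (T.le_opNorm a).trans_eq rfl

/-- The space `c₀ = C₀(ℕ, ℝ)` of real sequences converging to zero, with the supremum norm,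
is locally `1`-injective: for every finite-dimensional Banach space `B` and subspace
`A ⊆ B`, every operator `t : A → c₀` extends to `T : B → c₀` with `‖T‖ = ‖t‖`. -/
theorem czero_locallyInjective1 :
    ∀ B : BanachSpace.{0}, FiniteDimensional ℝ B.carrier →
      ∀ (A : Submodule ℝ B.carrier) (t : A →L[ℝ] C₀(ℕ, ℝ)),
        ∃ T : B.carrier →L[ℝ] C₀(ℕ, ℝ),
          (∀ a : A, T (a : B.carrier) = t a) ∧ ‖T‖ = ‖t‖ := by
  intro B hB A t
  haveI := hB
  exact czero_extension A t
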